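/- arXiv:1605.07544 — 3 statements merged into one kernel-verified Lean document; each statement's English description precedes it below -/
import Mathlib

section
/- Every rest point P of the replicator dynamics that is asymptotically stable with respect to the variational norm must be finitely supported. -/
open MeasureTheory Filter Topology
open scoped ENNReal

/-- Variational (strong) norm distance between two measures:
`‖P - Q‖ = 2 ⋅ sup_B |P(B) - Q(B)|` over Borel sets `B`. -/
noncomputable def vdist {S : Type*} [MeasurableSpace S] (P Q : Measure S) : ℝ :=
  2 * ⨆ B : {B : Set S // MeasurableSet B}, |(P B.1).toReal - (Q B.1).toReal|

/-- Mean payoff `E(P,Q) = ∫∫ u(z,w) Q(dw) P(dz)`. -/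
noncomputable def payE {S : Type*} [MeasurableSpace S] (u : S → S → ℝ) (P Q : Measure S) : ℝ :=
  ∫ z, ∫ w, u z w ∂Q ∂P

/-- Average success `σ(z,Q) = E(δ_z,Q) - E(Q,Q)`. -/
noncomputable def sigmaF {S : Type*} [MeasurableSpace S] (u : S → S → ℝ) (z : S)
    (Q : Measure S) : ℝ :=
  (∫ w, u z w ∂Q) - payE u Q Q

/-- `P` is a rest point of the replicator dynamics: `F(P)(B) = ∫_B σ(z,P) P(dz) = 0` for all
Borel `B`. -/
def IsRestPoint {S : Type*} [MeasurableSpace S] (u : S → S → ℝ) (P : Measure S) : Prop :=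
  ∀ B : Set S, MeasurableSet B → ∫ z in B, sigmaF u z P ∂P = 0

/-- A solution of the replicator dynamics `Q'(t)(B) = ∫_B σ(z,Q(t)) Q(t)(dz)`. -/
def IsReplicatorTrajectory {S : Type*} [MeasurableSpace S] (u : S → S → ℝ)
    (Q : ℝ → Measure S) : Prop :=
  (∀ t : ℝ, IsProbabilityMeasure (Q t)) ∧
  ∀ B : Set S, MeasurableSet B → ∀ t : ℝ, 0 ≤ t →
    HasDerivAt (fun s => ((Q s) B).toReal) (∫ z in B, sigmaF u z (Q t) ∂(Q t)) t

/-- The polymorphic population state `P* = Σ_j α_j δ_{x_j}`. -/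
noncomputable def polyState {S : Type*} [MeasurableSpace S] {k : ℕ} (α : Fin k → ℝ)
    (x : Fin k → S) : Measure S :=
  ∑ j : Fin k, ENNReal.ofReal (α j) • Measure.dirac (x j)

/-- The (topological) support of a measure. -/
def msupport {S : Type*} [TopologicalSpace S] [MeasurableSpace S] (P : Measure S) : Set S :=
  {z | ∀ U : Set S, IsOpen U → z ∈ U → 0 < P U}

lemma msupport_compl_eq {S : Type*} [TopologicalSpace S] [MeasurableSpace S] (P : Measure S) :
    (msupport P)ᶜ = ⋃₀ {U : Set S | IsOpen U ∧ P U = 0} := by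
  ext z
  simp only [Set.mem_compl_iff, msupport, Set.mem_setOf_eq, not_forall, Set.mem_sUnion]
  constructor
  · rintro ⟨U, hU, hz, hP⟩
    exact ⟨U, ⟨hU, by simpa [pos_iff_ne_zero] using hP⟩, hz⟩
  · rintro ⟨U, ⟨hU, hP⟩, hz⟩
    exact ⟨U, hU, hz, by simp [hP]⟩

lemma msupport_isClosed {S : Type*} [TopologicalSpace S] [MeasurableSpace S] (P : Measure S) :
    IsClosed (msupport P) := by
  rw [← isOpen_compl_iff, msupport_compl_eq]
  exact isOpen_sUnion fun U hU => hU.1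

lemma measure_compl_msupport {S : Type*} [TopologicalSpace S] [SecondCountableTopology S]
    [MeasurableSpace S] (P : Measure S) : P (msupport P)ᶜ = 0 := by
  obtain ⟨T, hTc, hTsub, hTeq⟩ :=
    TopologicalSpace.isOpen_sUnion_countable {U : Set S | IsOpen U ∧ P U = 0}
      (fun U hU => hU.1)
  rw [msupport_compl_eq, ← hTeq]
  exact (measure_sUnion_null_iff hTc).2 fun U hU => (hTsub hU).2

/-- van Veelen–Spreij: a rest point of the replicator dynamics that is
asymptotically stable w.r.t. the variational norm must be finitely supported. The replicator
dynamics is assumed well posed (a solution exists from every initial probability measure) and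
support preserving. -/
theorem asymptoticallyStable_restPoint_finitelySupported
    {S : Type*} [MeasurableSpace S] [TopologicalSpace S] [PolishSpace S] [BorelSpace S]
    (u : S → S → ℝ) (hu_meas : Measurable (Function.uncurry u))
    (hu_bdd : ∃ M : ℝ, ∀ z w : S, |u z w| ≤ M)
    (hexists : ∀ Q₀ : Measure S, IsProbabilityMeasure Q₀ →
      ∃ Q : ℝ → Measure S, IsReplicatorTrajectory u Q ∧ Q 0 = Q₀)
    (hsupp : ∀ Q : ℝ → Measure S, IsReplicatorTrajectory u Q →
      ∀ t : ℝ, 0 ≤ t → msupport (Q t) = msupport (Q 0))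
    (P : Measure S) [IsProbabilityMeasure P] (hrest : IsRestPoint u P)
    -- Lyapunov stability of `P`:
    (hLyap : ∀ ε : ℝ, 0 < ε → ∃ η : ℝ, 0 < η ∧
      ∀ Q : ℝ → Measure S, IsReplicatorTrajectory u Q → vdist (Q 0) P < η →
        ∀ t : ℝ, 0 ≤ t → vdist (Q t) P < ε)
    -- `P` is strongly attracting:
    (hAttr : ∃ η : ℝ, 0 < η ∧
      ∀ Q : ℝ → Measure S, IsReplicatorTrajectory u Q → vdist (Q 0) P < η →
        Tendsto (fun t => vdist (Q t) P) atTop (𝓝 0)) :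
    ∃ A : Finset S, P (↑A : Set S) = 1 := by
  letI := TopologicalSpace.upgradeIsCompletelyMetrizable S
  by_contra hfin
  push_neg at hfin
  obtain ⟨η, hη, hattr⟩ := hAttr
  have hPcompl : P (msupport P)ᶜ = 0 := measure_compl_msupport P
  -- the support of `P` is infinite
  have hinf : (msupport P).Infinite := by
    by_contra hfin2
    rw [Set.not_infinite] at hfin2
    refine hfin hfin2.toFinset ?_
    have hm : MeasurableSet (↑hfin2.toFinset : Set S) :=
      (hfin2.toFinset.finite_toSet).measurableSet
    have h0 : P (↑hfin2.toFinset : Set S)ᶜ = 0 := by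
      rw [Set.Finite.coe_toFinset]; exact hPcompl
    exact (prob_compl_eq_zero_iff hm).1 h0
  -- choose ε
  set ε : ℝ := min (η / 3) (1 / 2) with hεdef
  have hε : 0 < ε := lt_min (by linarith) (by norm_num)
  have hεη : ε ≤ η / 3 := min_le_left _ _
  have hεhalf : ε ≤ 1 / 2 := min_le_right _ _
  -- find a point of the support with small mass
  have hatom : ∃ z ∈ msupport P, P {z} < ENNReal.ofReal ε := by
    by_contra h
    push_neg at h
    set n : ℕ := ⌈ε⁻¹⌉₊ + 1 with hndef
    obtain ⟨t, htsub, htcard⟩ := hinf.exists_subset_card_eq n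
    have hsum : ∑ z ∈ t, P {z} = P ↑t := by
      rw [← measure_biUnion_finset ?_ (fun z _ => measurableSet_singleton z)]
      · congr 1
        ext x; simp
      · exact fun x _ y _ hxy => Set.disjoint_singleton.2 hxy
    have hlow : (n : ℝ≥0∞) * ENNReal.ofReal ε ≤ ∑ z ∈ t, P {z} := by
      calc (n : ℝ≥0∞) * ENNReal.ofReal ε = t.card • ENNReal.ofReal ε := by
            rw [htcard, nsmul_eq_mul]
        _ ≤ ∑ z ∈ t, P {z} := Finset.card_nsmul_le_sum t _ _ fun z hz => h z (htsub hz)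
    have hgt : (1 : ℝ≥0∞) < (n : ℝ≥0∞) * ENNReal.ofReal ε := by
      have hceil : ε⁻¹ ≤ (⌈ε⁻¹⌉₊ : ℝ) := Nat.le_ceil _
      have hnR : 1 < (n : ℝ) * ε := by
        have hinv : ε⁻¹ * ε = 1 := inv_mul_cancel₀ hε.ne'
        have : (n : ℝ) = (⌈ε⁻¹⌉₊ : ℝ) + 1 := by push_cast [hndef]; ring
        nlinarith
      calc (1 : ℝ≥0∞) = ENNReal.ofReal 1 := by simp
        _ < ENNReal.ofReal ((n : ℝ) * ε) :=
            (ENNReal.ofReal_lt_ofReal_iff (by positivity)).2 hnR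
        _ = (n : ℝ≥0∞) * ENNReal.ofReal ε := by
            rw [ENNReal.ofReal_mul (by positivity)]
            congr 1
            exact ENNReal.ofReal_natCast n
    have hle1 : P ↑t ≤ 1 := prob_le_one
    rw [hsum] at hlow
    exact absurd (lt_of_lt_of_le hgt (hlow.trans hle1)) (lt_irrefl _)
  obtain ⟨z, hzP, hzsmall⟩ := hatom
  -- an open neighborhood of `z` of small measure, by outer regularity
  obtain ⟨U, hUsup, hUopen, hUsmall⟩ := Set.exists_isOpen_lt_of_lt {z} (ENNReal.ofReal ε) hzsmall
  have hzU : z ∈ U := hUsup rfl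
  have hUm : MeasurableSet U := hUopen.measurableSet
  -- real quantities
  set p : ℝ := (P U).toReal with hpdef
  have hp : p < ε := ENNReal.toReal_lt_of_lt_ofReal hUsmall
  have hp0 : 0 ≤ p := ENNReal.toReal_nonneg
  have hphalf : p < 1 / 2 := lt_of_lt_of_le hp hεhalf
  have hq : (P Uᶜ).toReal = 1 - p := by
    have hadd : P U + P Uᶜ = 1 := by
      rw [measure_add_measure_compl hUm, measure_univ]
    have := congrArg ENNReal.toReal hadd
    rw [ENNReal.toReal_add (measure_ne_top _ _) (measure_ne_top _ _)] at this
    simp only [ENNReal.toReal_one] at this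
    linarith [this]
  have hUc_ne : P Uᶜ ≠ 0 := by
    intro h0
    rw [h0] at hq
    simp at hq
    linarith
  have hUc_netop : P Uᶜ ≠ ⊤ := measure_ne_top _ _
  -- the perturbed measure
  set Q₀ : Measure S := (P Uᶜ)⁻¹ • P.restrict Uᶜ with hQ₀def
  have hQ₀app : ∀ B : Set S, MeasurableSet B → Q₀ B = (P Uᶜ)⁻¹ * P (B ∩ Uᶜ) := by
    intro B hB
    rw [hQ₀def, Measure.smul_apply, Measure.restrict_apply hB, smul_eq_mul]
  haveI hQ₀prob : IsProbabilityMeasure Q₀ := by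
    constructor
    rw [hQ₀app Set.univ MeasurableSet.univ, Set.univ_inter]
    exact ENNReal.inv_mul_cancel hUc_ne hUc_netop
  -- Q₀ is close to P in variational distance
  have hbound : ∀ B : Set S, MeasurableSet B →
      |(Q₀ B).toReal - (P B).toReal| ≤ p := by
    intro B hB
    have hsplit : P (B ∩ U) + P (B ∩ Uᶜ) = P B := by
      have := measure_inter_add_diff B hUm (μ := P)
      rwa [Set.diff_eq] at this
    set a : ℝ := (P (B ∩ Uᶜ)).toReal with hadef
    set b : ℝ := (P (B ∩ U)).toReal with hbdef
    have hPB : (P B).toReal = b + a := by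
      rw [← hsplit, ENNReal.toReal_add (measure_ne_top _ _) (measure_ne_top _ _)]
    have hQ₀B : (Q₀ B).toReal = (1 - p)⁻¹ * a := by
      rw [hQ₀app B hB, ENNReal.toReal_mul, ENNReal.toReal_inv, hq]
    have ha0 : 0 ≤ a := ENNReal.toReal_nonneg
    have hb0 : 0 ≤ b := ENNReal.toReal_nonneg
    have ha1 : a ≤ 1 - p := by
      rw [← hq]
      exact ENNReal.toReal_mono hUc_netop (measure_mono Set.inter_subset_right)
    have hb1 : b ≤ p := ENNReal.toReal_mono (measure_ne_top _ _)
      (measure_mono Set.inter_subset_right)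
    have hq2 : 0 < 1 - p := by linarith
    have hinv : (1 - p) * (1 - p)⁻¹ = 1 := mul_inv_cancel₀ hq2.ne'
    have hinv0 : 0 ≤ (1 - p)⁻¹ := inv_nonneg.2 hq2.le
    rw [hQ₀B, hPB, abs_le]
    constructor
    · nlinarith
    · nlinarith
  have hvd : vdist Q₀ P < η := by
    have hsup : vdist Q₀ P ≤ 2 * p := by
      rw [vdist]
      have : (⨆ B : {B : Set S // MeasurableSet B},
          |(Q₀ B.1).toReal - (P B.1).toReal|) ≤ p :=
        Real.iSup_le (fun B => hbound B.1 B.2) hp0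
      linarith
    calc vdist Q₀ P ≤ 2 * p := hsup
      _ < 2 * ε := by linarith
      _ ≤ η := by linarith
  -- the trajectory from Q₀
  obtain ⟨Q, hQtraj, hQ0⟩ := hexists Q₀ hQ₀prob
  have htend : Tendsto (fun t => vdist (Q t) P) atTop (𝓝 0) :=
    hattr Q hQtraj (by rw [hQ0]; exact hvd)
  -- z is not in the support of Q₀
  have hzout : z ∉ msupport Q₀ := by
    intro hz
    have h0 : Q₀ U = 0 := by
      rw [hQ₀app U hUm, Set.inter_compl_self, measure_empty, mul_zero]
    have := hz U hUopen hzU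
    rw [h0] at this
    exact lt_irrefl _ this
  -- but z must be in the support of Q₀
  have hzin : z ∈ msupport Q₀ := by
    have hclosed := msupport_isClosed Q₀
    rw [← hclosed.closure_eq, mem_closure_iff]
    intro V hV hzV
    have hPV : 0 < P V := hzP V hV hzV
    have hPVr : 0 < (P V).toReal := ENNReal.toReal_pos hPV.ne' (measure_ne_top _ _)
    have hev : ∀ᶠ t in atTop, vdist (Q t) P < (P V).toReal ∧ 0 ≤ t :=
      (htend.eventually (gt_mem_nhds hPVr)).and (eventually_ge_atTop 0)
    obtain ⟨t, hlt, ht0⟩ := hev.exists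
    haveI : IsProbabilityMeasure (Q t) := hQtraj.1 t
    have hbdd : BddAbove (Set.range fun B : {B : Set S // MeasurableSet B} =>
        |((Q t) B.1).toReal - (P B.1).toReal|) := by
      refine ⟨2, ?_⟩
      rintro x ⟨B, rfl⟩
      have h1 : ((Q t) B.1).toReal ≤ 1 := by
        have := prob_le_one (μ := Q t) (s := B.1)
        calc ((Q t) B.1).toReal ≤ (1 : ℝ≥0∞).toReal :=
              ENNReal.toReal_mono (by simp) this
          _ = 1 := by simp
      have h2 : (P B.1).toReal ≤ 1 := by
        have := prob_le_one (μ := P) (s := B.1)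
        calc (P B.1).toReal ≤ (1 : ℝ≥0∞).toReal :=
              ENNReal.toReal_mono (by simp) this
          _ = 1 := by simp
      have h3 : 0 ≤ ((Q t) B.1).toReal := ENNReal.toReal_nonneg
      have h4 : 0 ≤ (P B.1).toReal := ENNReal.toReal_nonneg
      rw [abs_le]
      constructor <;> linarith
    have hle : |((Q t) V).toReal - (P V).toReal| ≤ vdist (Q t) P / 2 := by
      have := le_ciSup hbdd ⟨V, hV.measurableSet⟩
      rw [vdist]
      simp only at this ⊢
      linarith
    have hQtV : 0 < ((Q t) V).toReal := by
      have := abs_le.1 hle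
      linarith [this.1]
    have hQtV' : (Q t) V ≠ 0 := by
      intro h0
      rw [h0] at hQtV
      simp at hQtV
    have hsuppt : msupport (Q t) = msupport Q₀ := by
      rw [hsupp Q hQtraj t ht0, hQ0]
    by_contra hempty
    rw [Set.not_nonempty_iff_eq_empty] at hempty
    have hVsub : V ⊆ (msupport (Q t))ᶜ := by
      rw [hsuppt]
      intro x hx hxs
      have hmem : x ∈ V ∩ msupport Q₀ := ⟨hx, hxs⟩
      rw [hempty] at hmem
      exact Set.notMem_empty x hmem
    exact hQtV' (measure_mono_null hVsub (measure_compl_msupport _))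
  exact hzout hzin
end

section
/- Along any replicator dynamics trajectory Q(t) with Q(t)({x_j}) > 0 for all j and t, the function t ↦ V(Q(t)) = Σ_j α_j ln(α_j / Q(t)({x_j})) satisfies d/dt V(Q(t)) = −E(P*, Q(t)) + E(Q(t), Q(t)), where P* = Σ_j α_jδ_{x_j}. -/
open MeasureTheory Filter Topology

/-- along a replicator trajectory with positive atoms,
`d/dt V(Q(t)) = -E(P*,Q(t)) + E(Q(t),Q(t))` where
`V(Q) = Σ_j α_j ln(α_j / Q({x_j}))` and `P* = Σ_j α_j δ_{x_j}`. -/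
theorem deriv_lyapunov_along_trajectory
    {S : Type*} [MeasurableSpace S] [TopologicalSpace S] [PolishSpace S] [BorelSpace S]
    (u : S → S → ℝ) (hu_meas : Measurable (Function.uncurry u))
    (hu_bdd : ∃ M : ℝ, ∀ z w : S, |u z w| ≤ M)
    {k : ℕ} (hk : 0 < k) (x : Fin k → S) (hx : Function.Injective x)
    (α : Fin k → ℝ) (hα : ∀ j, 0 < α j) (hαsum : ∑ j, α j = 1)
    (Q : ℝ → Measure S) (hprob : ∀ t, IsProbabilityMeasure (Q t))
    (hpos : ∀ t, ∀ j, 0 < (Q t) {x j})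
    (hdyn : ∀ j, ∀ t : ℝ, HasDerivAt (fun s => ((Q s) {x j}).toReal)
      (((Q t) {x j}).toReal * sigmaF u (x j) (Q t)) t) :
    ∀ t : ℝ, HasDerivAt (fun s => ∑ j, α j * Real.log (α j / ((Q s) {x j}).toReal))
      (-(payE u (polyState α x) (Q t)) + payE u (Q t) (Q t)) t := by
  intro t
  -- positivity of atom masses (as reals)
  have qpos : ∀ s j, 0 < ((Q s) {x j}).toReal := by
    intro s j
    have := hprob s
    exact ENNReal.toReal_pos (hpos s j).ne' (measure_ne_top _ _)
  -- derivative of each log term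
  have key : ∀ j, HasDerivAt (fun s => α j * Real.log (α j / ((Q s) {x j}).toReal))
      (-(α j * sigmaF u (x j) (Q t))) t := by
    intro j
    have hlog : HasDerivAt (fun s => Real.log (((Q s) {x j}).toReal))
        ((((Q t) {x j}).toReal * sigmaF u (x j) (Q t)) / ((Q t) {x j}).toReal) t :=
      (hdyn j t).log (qpos t j).ne'
    rw [mul_comm, mul_div_assoc, div_self (qpos t j).ne', mul_one] at hlog
    have h2 : HasDerivAt (fun s => α j * (Real.log (α j) - Real.log (((Q s) {x j}).toReal)))
        (α j * (0 - sigmaF u (x j) (Q t))) t :=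
      ((hasDerivAt_const t (Real.log (α j))).sub hlog).const_mul (α j)
    have heq : (fun s => α j * Real.log (α j / ((Q s) {x j}).toReal))
        = fun s => α j * (Real.log (α j) - Real.log (((Q s) {x j}).toReal)) := by
      funext s
      rw [Real.log_div (hα j).ne' (qpos s j).ne']
    rw [heq]
    convert h2 using 1
    ring
  have hsum : HasDerivAt (fun s => ∑ j, α j * Real.log (α j / ((Q s) {x j}).toReal))
      (∑ j, -(α j * sigmaF u (x j) (Q t))) t := HasDerivAt.fun_sum (fun j _ => key j)
  -- compute payE against the polymorphic state
  have hsm : StronglyMeasurable (fun z => ∫ w, u z w ∂(Q t)) := by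
    have := hprob t
    exact (hu_meas.stronglyMeasurable).integral_prod_right
  have hpoly : payE u (polyState α x) (Q t) = ∑ j, α j * ∫ w, u (x j) w ∂(Q t) := by
    unfold payE polyState
    rw [MeasureTheory.integral_finset_sum_measure]
    · refine Finset.sum_congr rfl fun j _ => ?_
      rw [MeasureTheory.integral_smul_measure, MeasureTheory.integral_dirac' _ _ hsm,
        ENNReal.toReal_ofReal (hα j).le, smul_eq_mul]
    · intro j _
      refine MeasureTheory.Integrable.smul_measure ?_ ENNReal.ofReal_ne_top
      obtain ⟨M, hM⟩ := hu_bdd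
      have hgb : ∀ z, ‖∫ w, u z w ∂(Q t)‖ ≤ M := by
        intro z
        have := hprob t
        calc ‖∫ w, u z w ∂(Q t)‖ ≤ M * ((Q t) Set.univ).toReal :=
              MeasureTheory.norm_integral_le_of_norm_le_const
                (MeasureTheory.ae_of_all _ fun w => by
                  simpa [Real.norm_eq_abs] using hM z w)
          _ = M := by simp
      exact MeasureTheory.Integrable.mono' (MeasureTheory.integrable_const M)
        hsm.aestronglyMeasurable (MeasureTheory.ae_of_all _ hgb)
  have hfinal : (∑ j, -(α j * sigmaF u (x j) (Q t)))
      = -(payE u (polyState α x) (Q t)) + payE u (Q t) (Q t) := by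
    rw [hpoly]
    simp only [sigmaF, mul_sub, neg_sub]
    rw [Finset.sum_sub_distrib, ← Finset.sum_mul, hαsum, one_mul]
    ring
  rw [← hfinal]
  exact hsum
end

section
/- If the polymorphic population state P* = Σ_{j=1}^k α_jδ_{x_j} is strongly unbeatable (there is ε > 0 such that E(P*,R) ≥ E(R,R) for all R ≠ P* with ‖R − P*‖ ≤ ε), then P* is Lyapunov stable for the replicator dynamics under the variational norm. -/
open MeasureTheory Filter Topology

namespace SU
variable {S : Type*} [MeasurableSpace S] [MeasurableSingletonClass S]

lemma setIntegral_singleton (μ : Measure S) (f : S → ℝ) (a : S) :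
    ∫ z in {a}, f z ∂μ = (μ {a}).toReal * f a := by
  rw [Measure.restrict_singleton, integral_smul_measure, integral_dirac, smul_eq_mul]

lemma integrable_dirac' (f : S → ℝ) (a : S) : Integrable f (Measure.dirac a) := by
  have h : f =ᵐ[Measure.dirac a] (fun _ => f a) := ae_eq_dirac f
  exact (integrable_const (f a)).congr h.symm

lemma integral_polyState {k : ℕ} (α : Fin k → ℝ) (hα : ∀ j, 0 ≤ α j) (x : Fin k → S)
    (f : S → ℝ) : ∫ z, f z ∂(polyState α x) = ∑ j, α j * f (x j) := by
  rw [polyState, integral_finset_sum_measure (fun i _ =>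
    (integrable_dirac' f (x i)).smul_measure ENNReal.ofReal_ne_top)]
  refine Finset.sum_congr rfl fun j _ => ?_
  rw [integral_smul_measure, integral_dirac, smul_eq_mul, ENNReal.toReal_ofReal (hα j)]

lemma polyState_apply_toReal {k : ℕ} (α : Fin k → ℝ) (hα : ∀ j, 0 ≤ α j) (x : Fin k → S)
    (B : Set S) :
    ((polyState α x) B).toReal = ∑ j, B.indicator (fun _ => α j) (x j) := by
  rw [polyState, Measure.finset_sum_apply]
  rw [ENNReal.toReal_sum (fun j _ => by
    simp only [Measure.smul_apply, smul_eq_mul]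
    exact ENNReal.mul_ne_top ENNReal.ofReal_ne_top
      (by rw [Measure.dirac_apply]; by_cases h : x j ∈ B <;> simp [h]))]
  refine Finset.sum_congr rfl fun j _ => ?_
  simp only [Measure.smul_apply, smul_eq_mul, Measure.dirac_apply]
  by_cases h : x j ∈ B <;> simp [h, Set.indicator_apply, ENNReal.toReal_ofReal (hα j)]


lemma polyState_isProb {k : ℕ} (α : Fin k → ℝ) (hα : ∀ j, 0 ≤ α j) (hs : ∑ j, α j = 1)
    (x : Fin k → S) : IsProbabilityMeasure (polyState α x) := by
  constructor
  rw [polyState, Measure.finset_sum_apply]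
  have : ∀ j ∈ Finset.univ, (ENNReal.ofReal (α j) • Measure.dirac (x j)) Set.univ
      = ENNReal.ofReal (α j) := by
    intro j _; simp [Measure.smul_apply]
  rw [Finset.sum_congr rfl this, ← ENNReal.ofReal_sum_of_nonneg (fun j _ => hα j), hs,
    ENNReal.ofReal_one]


lemma toReal_prob_le_one (Q : Measure S) [IsProbabilityMeasure Q] (B : Set S) :
    (Q B).toReal ≤ 1 := by
  have := prob_le_one (μ := Q) (s := B)
  simpa using ENNReal.toReal_mono (by simp) this

lemma abs_diff_le_one (P Q : Measure S) [IsProbabilityMeasure P] [IsProbabilityMeasure Q]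
    (B : Set S) : |(P B).toReal - (Q B).toReal| ≤ 1 := by
  rw [abs_le]
  constructor
  · have := toReal_prob_le_one Q B
    have h2 : 0 ≤ (P B).toReal := ENNReal.toReal_nonneg
    linarith
  · have := toReal_prob_le_one P B
    have h2 : 0 ≤ (Q B).toReal := ENNReal.toReal_nonneg
    linarith

lemma le_vdist (P Q : Measure S) [IsProbabilityMeasure P] [IsProbabilityMeasure Q]
    {B : Set S} (hB : MeasurableSet B) :
    2 * |(P B).toReal - (Q B).toReal| ≤ vdist P Q := by
  rw [vdist]
  have hb : BddAbove (Set.range fun B : {B : Set S // MeasurableSet B} =>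
      |(P B.1).toReal - (Q B.1).toReal|) :=
    ⟨1, by rintro _ ⟨C, rfl⟩; exact abs_diff_le_one P Q C.1⟩
  have := le_ciSup hb ⟨B, hB⟩
  linarith

lemma vdist_le (P Q : Measure S) {c : ℝ}
    (h : ∀ B : Set S, MeasurableSet B → |(P B).toReal - (Q B).toReal| ≤ c) :
    vdist P Q ≤ 2 * c := by
  rw [vdist]
  have : Nonempty {B : Set S // MeasurableSet B} := ⟨⟨∅, MeasurableSet.empty⟩⟩
  have := ciSup_le (fun B : {B : Set S // MeasurableSet B} => h B.1 B.2)
  linarith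

lemma measure_biUnion_singleton {k : ℕ} (x : Fin k → S) (hx : Function.Injective x)
    (Q : Measure S) (I : Finset (Fin k)) :
    Q (⋃ j ∈ I, {x j}) = ∑ j ∈ I, Q {x j} := by
  refine measure_biUnion_finset ?_ (fun j _ => measurableSet_singleton (x j))
  intro i _ j _ hij
  simp only [Function.onFun, Set.disjoint_singleton]
  exact hx.ne hij

lemma sum_singleton_toReal {k : ℕ} (x : Fin k → S) (hx : Function.Injective x)
    (Q : Measure S) [IsProbabilityMeasure Q] (I : Finset (Fin k)) :
    (Q (⋃ j ∈ I, {x j})).toReal = ∑ j ∈ I, (Q {x j}).toReal := by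
  rw [measure_biUnion_singleton x hx Q I]
  exact ENNReal.toReal_sum (fun j _ => measure_ne_top Q _)


lemma key_tv {k : ℕ} (α : Fin k → ℝ) (hα : ∀ j, 0 ≤ α j) (hαs : ∑ j, α j = 1)
    (x : Fin k → S) (hx : Function.Injective x)
    (Q : Measure S) [IsProbabilityMeasure Q] {B : Set S} (hB : MeasurableSet B) :
    |(Q B).toReal - ((polyState α x) B).toReal| ≤ 2 * ∑ j, |(Q {x j}).toReal - α j| := by
  classical
  set T : Set S := ⋃ j ∈ (Finset.univ : Finset (Fin k)), {x j} with hTdef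
  have hT : MeasurableSet T := by
    exact (Finset.univ : Finset (Fin k)).measurableSet_biUnion
      (fun j _ => measurableSet_singleton (x j))
  set I : Finset (Fin k) := Finset.univ.filter (fun j => x j ∈ B) with hIdef
  have hBT : B ∩ T = ⋃ j ∈ I, {x j} := by
    ext z
    simp only [hTdef, hIdef, Set.mem_inter_iff, Set.mem_iUnion, Set.mem_singleton_iff,
      Finset.mem_filter, Finset.mem_univ, true_and, exists_prop]
    aesop
  set q : Fin k → ℝ := fun j => (Q {x j}).toReal with hq
  set φ : ℝ := ∑ j, |q j - α j| with hφ
  -- split of Q B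
  have hsplit0 : Q (B ∩ T) + Q (B \ T) = Q B := measure_inter_add_diff B hT
  have hsplit : (Q B).toReal = (∑ j ∈ I, q j) + (Q (B \ T)).toReal := by
    rw [← hsplit0, ENNReal.toReal_add (measure_ne_top _ _) (measure_ne_top _ _), hBT,
      sum_singleton_toReal x hx Q I]
  -- polyState value
  have hPB : ((polyState α x) B).toReal = ∑ j ∈ I, α j := by
    rw [polyState_apply_toReal α hα x B, hIdef, Finset.sum_filter]
    exact Finset.sum_congr rfl fun j _ => Set.indicator_apply B _ (x j)
  -- remainder bounds
  have hTc : (Q T).toReal + (Q Tᶜ).toReal = 1 := by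
    have h0 : Q T + Q Tᶜ = 1 := by
      rw [measure_add_measure_compl hT, measure_univ]
    have := congrArg ENNReal.toReal h0
    rwa [ENNReal.toReal_add (measure_ne_top _ _) (measure_ne_top _ _), ENNReal.toReal_one] at this
  have hQT : (Q T).toReal = ∑ j, q j := sum_singleton_toReal x hx Q Finset.univ
  have hr1 : (Q (B \ T)).toReal ≤ 1 - ∑ j, q j := by
    have hsub : B \ T ⊆ Tᶜ := fun z hz => hz.2
    have := ENNReal.toReal_mono (measure_ne_top Q Tᶜ) (measure_mono hsub)
    rw [← hQT]; linarith
  have hr0 : 0 ≤ (Q (B \ T)).toReal := ENNReal.toReal_nonneg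
  have hsumabs : 1 - ∑ j, q j ≤ φ := by
    have h1 : 1 - ∑ j, q j = ∑ j, (α j - q j) := by
      rw [Finset.sum_sub_distrib, hαs]
    have h2 : ∀ j ∈ Finset.univ, α j - q j ≤ |q j - α j| := by
      intro j _
      rw [abs_sub_comm]
      exact le_abs_self _
    rw [h1, hφ]
    exact Finset.sum_le_sum h2
  have hIabs : |∑ j ∈ I, (q j - α j)| ≤ φ := by
    calc |∑ j ∈ I, (q j - α j)| ≤ ∑ j ∈ I, |q j - α j| := Finset.abs_sum_le_sum_abs _ _
    _ ≤ ∑ j, |q j - α j| := Finset.sum_le_sum_of_subset_of_nonneg (Finset.subset_univ I)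
        (fun j _ _ => abs_nonneg _)
  have hdiff : (Q B).toReal - ((polyState α x) B).toReal
      = (∑ j ∈ I, (q j - α j)) + (Q (B \ T)).toReal := by
    rw [hsplit, hPB, Finset.sum_sub_distrib]; ring
  rw [hdiff]
  calc |(∑ j ∈ I, (q j - α j)) + (Q (B \ T)).toReal|
      ≤ |∑ j ∈ I, (q j - α j)| + |(Q (B \ T)).toReal| := abs_add_le _ _
    _ ≤ φ + φ := by
        rw [abs_of_nonneg hr0]
        exact add_le_add hIabs (le_trans hr1 hsumabs)
    _ = 2 * ∑ j, |q j - α j| := by rw [hφ]; ring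


lemma entropy_term_le {k : ℕ} (α q : Fin k → ℝ) (hα : ∀ j, 0 < α j) (hq : ∀ j, 0 < q j)
    (hαs : ∑ j, α j = 1) (hqs : ∑ j, q j ≤ 1) (j : Fin k) :
    α j * (q j / α j - 1 - Real.log (q j / α j))
      ≤ ∑ i, α i * (Real.log (α i) - Real.log (q i)) := by
  have hterm : ∀ i, α i * (q i / α i - 1 - Real.log (q i / α i))
      = q i - α i + α i * (Real.log (α i) - Real.log (q i)) := by
    intro i
    have hmul : α i * (q i / α i) = q i := by
      rw [mul_comm, div_mul_cancel₀ _ (ne_of_gt (hα i))]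
    rw [Real.log_div (ne_of_gt (hq i)) (ne_of_gt (hα i))]
    linear_combination hmul
  have hnn : ∀ i ∈ Finset.univ, 0 ≤ α i * (q i / α i - 1 - Real.log (q i / α i)) := by
    intro i _
    have := Real.log_le_sub_one_of_pos (div_pos (hq i) (hα i))
    have := (hα i).le
    nlinarith
  have hle : α j * (q j / α j - 1 - Real.log (q j / α j))
      ≤ ∑ i, α i * (q i / α i - 1 - Real.log (q i / α i)) :=
    Finset.single_le_sum hnn (Finset.mem_univ j)
  have hsum : ∑ i, α i * (q i / α i - 1 - Real.log (q i / α i))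
      = (∑ i, q i) - 1 + ∑ i, α i * (Real.log (α i) - Real.log (q i)) := by
    rw [Finset.sum_congr rfl (fun i _ => hterm i), Finset.sum_add_distrib,
      Finset.sum_sub_distrib, hαs]
  rw [hsum] at hle
  linarith

lemma abs_sub_one_le_of_f_le {r c : ℝ} (hr : 0 < r) (hc1 : c ≤ 1)
    (h : r - 1 - Real.log r ≤ c) : |r - 1| ≤ 3 * Real.sqrt c := by
  have hsq : Real.sqrt r > 0 := Real.sqrt_pos.2 hr
  have hlog : Real.log r ≤ 2 * (Real.sqrt r - 1) := by
    have h1 := Real.log_le_sub_one_of_pos hsq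
    have h2 : Real.log (Real.sqrt r) = Real.log r / 2 := Real.log_sqrt hr.le
    linarith
  have hkey : (Real.sqrt r - 1) ^ 2 ≤ c := by
    have hs : Real.sqrt r ^ 2 = r := Real.sq_sqrt hr.le
    nlinarith
  have h3 : |Real.sqrt r - 1| ≤ Real.sqrt c := by
    rw [← Real.sqrt_sq_eq_abs]
    exact Real.sqrt_le_sqrt hkey
  have hcnn : 0 ≤ Real.sqrt c := Real.sqrt_nonneg c
  have hc' : Real.sqrt c ≤ 1 := by
    rw [show (1 : ℝ) = Real.sqrt 1 by simp]
    exact Real.sqrt_le_sqrt hc1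
  have habs : |r - 1| = |Real.sqrt r - 1| * (Real.sqrt r + 1) := by
    have hs : Real.sqrt r ^ 2 = r := Real.sq_sqrt hr.le
    rw [← abs_of_pos (show (0:ℝ) < Real.sqrt r + 1 by linarith), ← abs_mul]
    congr 1
    nlinarith
  rw [habs]
  have h4 : Real.sqrt r ≤ 1 + Real.sqrt c := by
    cases abs_le.1 h3 with
    | intro h5 h6 => linarith
  calc |Real.sqrt r - 1| * (Real.sqrt r + 1) ≤ Real.sqrt c * (2 + Real.sqrt c) := by
        apply mul_le_mul h3 (by linarith) (by linarith) hcnn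
    _ ≤ 3 * Real.sqrt c := by nlinarith


lemma polyState_singleton {k : ℕ} (α : Fin k → ℝ) (hα : ∀ j, 0 ≤ α j) (x : Fin k → S)
    (hx : Function.Injective x) (j : Fin k) :
    ((polyState α x) {x j}).toReal = α j := by
  classical
  rw [polyState_apply_toReal α hα x]
  rw [Finset.sum_eq_single j]
  · rw [Set.indicator_apply, if_pos (Set.mem_singleton _)]
  · intro i _ hij
    simp only [Set.indicator_apply, Set.mem_singleton_iff]
    rw [if_neg (hx.ne hij)]
  · intro h; exact absurd (Finset.mem_univ j) h

end SU

set_option maxHeartbeats 2000000 in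
/-- a strongly unbeatable polymorphic population state `P* = Σ_j α_j δ_{x_j}`
is Lyapunov stable for the replicator dynamics under the variational norm. -/
theorem strongly_unbeatable_implies_lyapunov_stable
    {S : Type*} [MeasurableSpace S] [TopologicalSpace S] [PolishSpace S] [BorelSpace S]
    (u : S → S → ℝ) (hu_meas : Measurable (Function.uncurry u))
    (hu_bdd : ∃ M : ℝ, ∀ z w : S, |u z w| ≤ M)
    {k : ℕ} (hk : 0 < k) (x : Fin k → S) (hx : Function.Injective x)
    (α : Fin k → ℝ) (hα : ∀ j, 0 < α j) (hαsum : ∑ j, α j = 1)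
    -- strong unbeatability of `P*`:
    (hunbeat : ∃ ε : ℝ, 0 < ε ∧ ∀ R : Measure S, IsProbabilityMeasure R →
      R ≠ polyState α x → vdist R (polyState α x) ≤ ε →
        payE u R R ≤ payE u (polyState α x) R) :
    -- Lyapunov stability:
    ∀ ε' : ℝ, 0 < ε' → ∃ η : ℝ, 0 < η ∧
      ∀ Q : ℝ → Measure S, IsReplicatorTrajectory u Q →
        vdist (Q 0) (polyState α x) < η →
          ∀ t : ℝ, 0 ≤ t → vdist (Q t) (polyState α x) < ε' := by
  classical
  obtain ⟨M0, hM0⟩ := hu_bdd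
  set M : ℝ := |M0| + 1 with hMdef
  have hM : ∀ z w : S, |u z w| ≤ M := fun z w =>
    le_trans (hM0 z w) (le_trans (le_abs_self M0) (by rw [hMdef]; linarith))
  have hMpos : 0 < M := by positivity
  obtain ⟨ε, hε, hub⟩ := hunbeat
  intro ε' hε'
  set P := polyState α x with hP
  haveI hPprob : IsProbabilityMeasure P := SU.polyState_isProb α (fun j => (hα j).le) hαsum x
  obtain ⟨j0, -, hj0⟩ := Finset.exists_min_image Finset.univ α ⟨⟨0, hk⟩, Finset.mem_univ _⟩
  set a0 := α j0 with ha0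
  have ha0pos : 0 < a0 := hα j0
  have ha0le : ∀ j, a0 ≤ α j := fun j => hj0 j (Finset.mem_univ j)
  have hαle1 : ∀ j, α j ≤ 1 := by
    intro j
    rw [← hαsum]
    exact Finset.single_le_sum (fun i _ => (hα i).le) (Finset.mem_univ j)
  have ha0le1 : a0 ≤ 1 := hαle1 j0
  set δ : ℝ := min ε ε' / (4 * k) with hδdef
  have hkpos : (0:ℝ) < k := by exact_mod_cast hk
  have hδpos : 0 < δ := div_pos (lt_min hε hε') (by positivity)
  set c : ℝ := min ((δ / 6) ^ 2) 1 with hcdef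
  have hcpos : 0 < c := lt_min (by positivity) one_pos
  have hc1 : c ≤ 1 := min_le_right _ _
  have h3sqrt : 3 * Real.sqrt c ≤ δ / 2 := by
    have h1 : Real.sqrt c ≤ δ / 6 := by
      calc Real.sqrt c ≤ Real.sqrt ((δ/6)^2) := Real.sqrt_le_sqrt (min_le_left _ _)
      _ = |δ/6| := Real.sqrt_sq_eq_abs _
      _ = δ/6 := abs_of_pos (by positivity)
    linarith
  set l : ℝ := a0 * c with hldef
  have hlpos : 0 < l := mul_pos ha0pos hcpos
  refine ⟨min a0 (l * a0 / 2), by positivity, ?_⟩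
  intro Q hQ hQ0 t htt
  obtain ⟨hprob, hderiv⟩ := hQ
  haveI : ∀ s : ℝ, IsProbabilityMeasure (Q s) := hprob
  set g : Fin k → ℝ → ℝ := fun j s => ((Q s) {x j}).toReal with hgdef
  -- payoff bounds
  have hintb : ∀ z s, |∫ w, u z w ∂(Q s)| ≤ M := by
    intro z s
    have h := norm_integral_le_of_norm_le_const (μ := Q s) (f := fun w => u z w) (C := M)
      (Filter.Eventually.of_forall (fun w => by rw [Real.norm_eq_abs]; exact hM z w))
    rwa [probReal_univ, mul_one, Real.norm_eq_abs] at h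
  have hpayb : ∀ s, |payE u (Q s) (Q s)| ≤ M := by
    intro s
    have h := norm_integral_le_of_norm_le_const (μ := Q s)
      (f := fun z => ∫ w, u z w ∂(Q s)) (C := M)
      (Filter.Eventually.of_forall (fun z => by rw [Real.norm_eq_abs]; exact hintb z s))
    rwa [probReal_univ, mul_one, Real.norm_eq_abs] at h
  have hsig : ∀ z s, -(2*M) ≤ sigmaF u z (Q s) := by
    intro z s
    have h1 := (abs_le.1 (hintb z s)).1
    have h2 := (abs_le.1 (hpayb s)).2
    rw [sigmaF]
    linarith
  -- derivative of the atom masses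
  have hgderiv : ∀ j, ∀ s : ℝ, 0 ≤ s →
      HasDerivAt (g j) (g j s * sigmaF u (x j) (Q s)) s := by
    intro j s hs
    have h := hderiv {x j} (measurableSet_singleton _) s hs
    rwa [SU.setIntegral_singleton] at h
  -- initial closeness
  set η := min a0 (l * a0 / 2) with hηdef
  have hη1 : η ≤ a0 := min_le_left _ _
  have hη2 : η ≤ l * a0 / 2 := min_le_right _ _
  have hηpos : 0 < η := by positivity
  have hPj : ∀ j, (P {x j}).toReal = α j := fun j =>
    SU.polyState_singleton α (fun i => (hα i).le) x hx j
  have hg0 : ∀ j, |g j 0 - α j| < η / 2 := by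
    intro j
    have h1 := SU.le_vdist (Q 0) P (measurableSet_singleton (x j))
    rw [hPj j] at h1
    have h2 : 2 * |g j 0 - α j| < η := lt_of_le_of_lt h1 hQ0
    linarith
  have hg0pos : ∀ j, a0 / 2 ≤ g j 0 := by
    intro j
    have h1 := (abs_lt.1 (hg0 j)).1
    have h2 := ha0le j
    linarith
  -- Gronwall positivity
  have hgpos : ∀ j, ∀ s : ℝ, 0 ≤ s → 0 < g j s := by
    intro j s hs
    set G : ℝ → ℝ := fun r => g j r * Real.exp (2 * M * r) with hGdef
    have hGd : ∀ r : ℝ, 0 ≤ r → HasDerivAt G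
        (g j r * sigmaF u (x j) (Q r) * Real.exp (2*M*r)
          + g j r * (Real.exp (2*M*r) * (2*M))) r := by
      intro r hr
      have h2 : HasDerivAt (fun y : ℝ => Real.exp (2*M*y)) (Real.exp (2*M*r) * (2*M)) r := by
        have := ((hasDerivAt_id r).const_mul (2*M)).exp
        simpa using this
      exact (hgderiv j r hr).mul h2
    have hmono : MonotoneOn G (Set.Ici 0) := by
      apply monotoneOn_of_deriv_nonneg (convex_Ici 0)
      · exact fun r hr => ((hGd r hr).continuousAt).continuousWithinAt
      · intro r hr
        rw [interior_Ici] at hr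
        exact (hGd r (le_of_lt hr)).differentiableAt.differentiableWithinAt
      · intro r hr
        rw [interior_Ici] at hr
        rw [(hGd r (le_of_lt hr)).deriv]
        have h1 : 0 ≤ g j r := ENNReal.toReal_nonneg
        have h2 := hsig (x j) r
        have h3 := (Real.exp_pos (2*M*r)).le
        have h4 : 0 ≤ g j r * Real.exp (2*M*r) * (sigmaF u (x j) (Q r) + 2*M) :=
          mul_nonneg (mul_nonneg h1 h3) (by linarith)
        nlinarith [h4]
    have hG0 : 0 < G 0 := by
      have : G 0 = g j 0 := by rw [hGdef]; simp
      rw [this]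
      linarith [hg0pos j, ha0pos]
    have hle := hmono (Set.self_mem_Ici) (Set.mem_Ici.2 hs) hs
    have hGs : 0 < G s := lt_of_lt_of_le hG0 hle
    have hexp := Real.exp_pos (2*M*s)
    by_contra hcon
    push_neg at hcon
    have hz : g j s = 0 := le_antisymm hcon ENNReal.toReal_nonneg
    rw [hGdef] at hGs
    simp only [hz] at hGs
    simp at hGs
  -- the Lyapunov function
  set V : ℝ → ℝ := fun s => ∑ j, α j * (Real.log (α j) - Real.log (g j s)) with hVdef
  have hPP : ∀ s, payE u P (Q s) = ∑ j, α j * ∫ w, u (x j) w ∂(Q s) := fun s =>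
    SU.integral_polyState α (fun i => (hα i).le) x (fun z => ∫ w, u z w ∂(Q s))
  have hVderiv : ∀ s : ℝ, 0 ≤ s →
      HasDerivAt V (payE u (Q s) (Q s) - payE u P (Q s)) s := by
    intro s hs
    have hterm : ∀ j ∈ Finset.univ, HasDerivAt
        (fun r => α j * (Real.log (α j) - Real.log (g j r)))
        (α j * -(sigmaF u (x j) (Q s))) s := by
      intro j _
      have h1 : HasDerivAt (fun r => Real.log (g j r)) (sigmaF u (x j) (Q s)) s := by
        have h0 := (hgderiv j s hs).log (ne_of_gt (hgpos j s hs))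
        rwa [mul_div_cancel_left₀ _ (ne_of_gt (hgpos j s hs))] at h0
      exact ((h1.const_sub (Real.log (α j))).const_mul (α j))
    have hsum := HasDerivAt.fun_sum hterm
    have hval : ∑ j, α j * -(sigmaF u (x j) (Q s))
        = payE u (Q s) (Q s) - payE u P (Q s) := by
      calc ∑ j, α j * -(sigmaF u (x j) (Q s))
          = ∑ j, (α j * payE u (Q s) (Q s) - α j * ∫ w, u (x j) w ∂(Q s)) := by
            refine Finset.sum_congr rfl fun j _ => ?_
            rw [sigmaF]; ring
        _ = (∑ j, α j) * payE u (Q s) (Q s) - ∑ j, α j * ∫ w, u (x j) w ∂(Q s) := by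
            rw [Finset.sum_sub_distrib, Finset.sum_mul]
        _ = payE u (Q s) (Q s) - payE u P (Q s) := by rw [hαsum, one_mul, hPP s]
    rw [hval] at hsum
    exact hsum
  -- closeness from small V
  have hclose : ∀ s, 0 ≤ s → V s ≤ l → ∀ j, |g j s - α j| ≤ δ / 2 := by
    intro s hs hVs j
    have hqpos : ∀ i, 0 < g i s := fun i => hgpos i s hs
    have hqsum : ∑ i, g i s ≤ 1 := by
      have h1 : ((Q s) (⋃ i ∈ (Finset.univ : Finset (Fin k)), {x i})).toReal = ∑ i, g i s :=
        SU.sum_singleton_toReal x hx (Q s) _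
      have h2 := SU.toReal_prob_le_one (Q s) (⋃ i ∈ (Finset.univ : Finset (Fin k)), {x i})
      linarith [h1 ▸ h2]
    have hent := SU.entropy_term_le α (fun i => g i s) hα hqpos hαsum hqsum j
    have hfle : g j s / α j - 1 - Real.log (g j s / α j) ≤ c := by
      have h3 : l ≤ α j * c := by
        rw [hldef]
        nlinarith [ha0le j, hcpos]
      have h4 : α j * (g j s / α j - 1 - Real.log (g j s / α j)) ≤ α j * c :=
        le_trans hent (le_trans hVs h3)
      exact le_of_mul_le_mul_left h4 (hα j)
    have habs := SU.abs_sub_one_le_of_f_le (div_pos (hqpos j) (hα j)) hc1 hfle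
    have heq : g j s - α j = α j * (g j s / α j - 1) := by
      rw [mul_sub, mul_one, mul_comm (α j), div_mul_cancel₀ _ (ne_of_gt (hα j))]
    rw [heq, abs_mul, abs_of_pos (hα j)]
    calc α j * |g j s / α j - 1| ≤ 1 * (δ/2) :=
        mul_le_mul (hαle1 j) (le_trans habs h3sqrt) (abs_nonneg _) zero_le_one
      _ = δ/2 := one_mul _
  -- vdist bound from small V
  have hvd : ∀ s, 0 ≤ s → V s ≤ l → vdist (Q s) P ≤ min ε ε' / 2 := by
    intro s hs hVs
    have h1 : ∀ B : Set S, MeasurableSet B →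
        |((Q s) B).toReal - (P B).toReal| ≤ 2 * (k * (δ/2)) := by
      intro B hB
      refine le_trans (SU.key_tv α (fun i => (hα i).le) hαsum x hx (Q s) hB) ?_
      have h2 : ∑ j, |g j s - α j| ≤ ∑ _j : Fin k, (δ/2) :=
        Finset.sum_le_sum (fun j _ => hclose s hs hVs j)
      rw [Finset.sum_const, Finset.card_univ, Fintype.card_fin, nsmul_eq_mul] at h2
      linarith
    have h3 := SU.vdist_le (Q s) P h1
    have hδeq : 2 * (2 * ((k:ℝ) * (δ/2))) = min ε ε' / 2 := by
      rw [hδdef]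
      field_simp
      ring
    linarith
  -- initial value of V is small
  have hV0 : V 0 ≤ l / 2 := by
    have hterm : ∀ j ∈ Finset.univ, α j * (Real.log (α j) - Real.log (g j 0))
        ≤ α j * (η / a0) := by
      intro j _
      have hgj : a0/2 ≤ g j 0 := hg0pos j
      have hgj' : 0 < g j 0 := lt_of_lt_of_le (by linarith) hgj
      have h1 : Real.log (α j) - Real.log (g j 0) ≤ (α j - g j 0) / g j 0 := by
        rw [← Real.log_div (ne_of_gt (hα j)) (ne_of_gt hgj')]
        have h2 := Real.log_le_sub_one_of_pos (div_pos (hα j) hgj')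
        have h3 : α j / g j 0 - 1 = (α j - g j 0) / g j 0 := by field_simp
        linarith
      have h4 : (α j - g j 0) / g j 0 ≤ (η/2) / (a0/2) := by
        apply div_le_div₀ (by positivity) _ (by linarith) hgj
        have := (abs_lt.1 (hg0 j)).1
        linarith
      have h5 : (η/2) / (a0/2) = η / a0 := by
        rw [div_div_div_comm]
        norm_num
      have h6 : Real.log (α j) - Real.log (g j 0) ≤ η / a0 := by
        rw [← h5]; linarith
      exact mul_le_mul_of_nonneg_left h6 (hα j).le
    have hsum : V 0 ≤ ∑ j, α j * (η / a0) := Finset.sum_le_sum hterm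
    have hsum2 : ∑ j, α j * (η / a0) = η / a0 := by
      rw [← Finset.sum_mul, hαsum, one_mul]
    have h7 : η / a0 ≤ l / 2 := by
      rw [div_le_iff₀ ha0pos]
      have : l / 2 * a0 = l * a0 / 2 := by ring
      linarith [hη2]
    linarith [hsum2 ▸ hsum]
  -- barrier argument: V stays below l
  have hall : ∀ s : ℝ, 0 ≤ s → V s < l := by
    by_contra hcon
    push_neg at hcon
    obtain ⟨t₁, ht₁, hVt₁⟩ := hcon
    set Bs : Set ℝ := Set.Icc 0 t₁ ∩ V ⁻¹' Set.Ici l with hBsdef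
    have hVcont : ContinuousOn V (Set.Icc 0 t₁) :=
      fun r hr => ((hVderiv r hr.1).continuousAt).continuousWithinAt
    have hclosed : IsClosed Bs :=
      hVcont.preimage_isClosed_of_isClosed isClosed_Icc isClosed_Ici
    have hne : Bs.Nonempty := ⟨t₁, ⟨ht₁, le_refl t₁⟩, hVt₁⟩
    have hbdd : BddBelow Bs := ⟨0, fun r hr => hr.1.1⟩
    set t₀ := sInf Bs with ht₀def
    have ht₀mem : t₀ ∈ Bs := hclosed.csInf_mem hne hbdd
    have ht₀0 : 0 ≤ t₀ := ht₀mem.1.1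
    have hVt₀ : l ≤ V t₀ := ht₀mem.2
    have ht₀pos : 0 < t₀ := by
      rcases eq_or_lt_of_le ht₀0 with h | h
      · exfalso
        rw [← h] at hVt₀
        linarith
      · exact h
    have hless : ∀ r, 0 ≤ r → r < t₀ → V r < l := by
      intro r hr hrt
      by_contra hge
      push_neg at hge
      have hrB : r ∈ Bs := ⟨⟨hr, le_trans hrt.le ht₀mem.1.2⟩, hge⟩
      have := csInf_le hbdd hrB
      linarith
    have hanti : AntitoneOn V (Set.Icc 0 t₀) := by
      apply antitoneOn_of_deriv_nonpos (convex_Icc 0 t₀)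
      · exact fun r hr => ((hVderiv r hr.1).continuousAt).continuousWithinAt
      · intro r hr
        rw [interior_Icc] at hr
        exact (hVderiv r hr.1.le).differentiableAt.differentiableWithinAt
      · intro r hr
        rw [interior_Icc] at hr
        rw [(hVderiv r hr.1.le).deriv]
        have hrV : V r < l := hless r hr.1.le hr.2
        have hvds : vdist (Q r) P ≤ ε := by
          have h1 := hvd r hr.1.le hrV.le
          have h2 := min_le_left ε ε'
          linarith
        by_cases hQP : Q r = P
        · rw [hQP]
          simp
        · have := hub (Q r) (hprob r) hQP hvds
          linarith
    have hmem0 : (0:ℝ) ∈ Set.Icc 0 t₀ := Set.left_mem_Icc.2 ht₀0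
    have hmemt : t₀ ∈ Set.Icc 0 t₀ := Set.right_mem_Icc.2 ht₀0
    have := hanti hmem0 hmemt ht₀0
    linarith
  -- conclusion
  have hfin := hvd t htt (hall t htt).le
  have hlt : min ε ε' / 2 < ε' := by
    have := min_le_right ε ε'
    linarith
  linarith
end
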